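/- (1) For all x, y ∈ ℝ^d one has f(x+y) ≥ f(x)·f(y). (2) There is a constant C > 0 (depending only on d and l) such that for all ρ > 0: vol(S^{d−1}) · (1+ρ)^{−d·l_d/2} ≤ ∫_{S^{d−1}} f(ρω) dμ(ω) ≤ C · (1+ρ)^{1 − d − l₁/2}. -/

import Mathlib

/- Statement 9 (Lemma `L1`):
   (1) `f(x+y) ≥ f(x)·f(y)` for all `x, y ∈ ℝ^d`;
   (2) `vol(S^{d−1})·(1+ρ)^{−d·l_d/2} ≤ ∫_{S^{d−1}} f(ρω) dμ(ω) ≤ C·(1+ρ)^{1−d−l₁/2}`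
       for all `ρ > 0`, with `C` depending only on `d`, `l`. -/

open MeasureTheory

namespace Stmt9

variable (d : ℕ) (l : Fin d → ℝ)

/-- `f(x) = ∏_{j=1}^d (1+|x_j|)^{−l_j/2}`. -/
noncomputable def f (x : EuclideanSpace ℝ (Fin d)) : ℝ :=
  ∏ j, (1 + |x j|) ^ (-(l j) / 2)

/-- The Euclidean surface measure `μ` on the unit sphere `S^{d−1} ⊂ ℝ^d`. -/
noncomputable def sphμ : Measure (Metric.sphere (0 : EuclideanSpace ℝ (Fin d)) 1) :=
  (volume : Measure (EuclideanSpace ℝ (Fin d))).toSphere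


open Set Metric ENNReal

section Helpers

variable {n : ℕ} {ll : Fin n → ℝ}

local notation "E'" => EuclideanSpace ℝ (Fin n)

lemma factor_pos (t : ℝ) : (0:ℝ) < 1 + |t| := by positivity

lemma f_nonneg (x : EuclideanSpace ℝ (Fin n)) : 0 ≤ f n ll x :=
  Finset.prod_nonneg fun j _ => Real.rpow_nonneg (factor_pos (x j)).le _

lemma f_anti (hl : ∀ j, 0 ≤ ll j) {x y : EuclideanSpace ℝ (Fin n)}
    (h : ∀ j, |x j| ≤ |y j|) : f n ll y ≤ f n ll x := by
  refine Finset.prod_le_prod (fun j _ => Real.rpow_nonneg (factor_pos (y j)).le _) fun j _ => ?_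
  exact Real.rpow_le_rpow_of_nonpos (factor_pos (x j))
    (by linarith [h j]) (by have := hl j; linarith)

lemma f_le_one (hl : ∀ j, 0 ≤ ll j) (x : EuclideanSpace ℝ (Fin n)) : f n ll x ≤ 1 := by
  calc f n ll x ≤ ∏ j : Fin n, 1 := by
        refine Finset.prod_le_prod (fun j _ => Real.rpow_nonneg (factor_pos (x j)).le _)
          fun j _ => Real.rpow_le_one_of_one_le_of_nonpos
            (by have := abs_nonneg (x j); linarith) (by have := hl j; linarith)
    _ = 1 := Finset.prod_const_one

lemma f_continuous : Continuous (f n ll) := by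
  refine continuous_finset_prod _ fun j _ => ?_
  have h1 : Continuous fun x : EuclideanSpace ℝ (Fin n) => 1 + |x j| := by fun_prop
  exact h1.rpow_const fun x => Or.inl (factor_pos (x j)).ne'

lemma part1 (hl : ∀ j, 0 ≤ ll j) (x y : EuclideanSpace ℝ (Fin n)) :
    f n ll x * f n ll y ≤ f n ll (x + y) := by
  rw [f, f, f, ← Finset.prod_mul_distrib]
  refine Finset.prod_le_prod (fun j _ => mul_nonneg (Real.rpow_nonneg (factor_pos _).le _)
    (Real.rpow_nonneg (factor_pos _).le _)) fun j _ => ?_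
  have hxy : (x + y) j = x j + y j := rfl
  rw [hxy, ← Real.mul_rpow (factor_pos _).le (factor_pos _).le]
  refine Real.rpow_le_rpow_of_nonpos (factor_pos _) ?_ (by have := hl j; linarith)
  have := abs_add_le (x j) (y j)
  have h1 := abs_nonneg (x j); have h2 := abs_nonneg (y j)
  nlinarith [abs_nonneg (x j + y j)]

lemma coord_le_norm (x : EuclideanSpace ℝ (Fin n)) (j : Fin n) : |x j| ≤ ‖x‖ := by
  rw [EuclideanSpace.norm_eq, ← Real.sqrt_sq_eq_abs]
  apply Real.sqrt_le_sqrt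
  have := Finset.single_le_sum (f := fun i => ‖x i‖ ^ 2)
    (fun i _ => sq_nonneg _) (Finset.mem_univ j)
  simpa [Real.norm_eq_abs, sq_abs] using this

/-! One-dimensional integral estimates -/

lemma oneD_integrable {p : ℝ} (hp : p ≤ -2) :
    Integrable (fun t : ℝ => (1 + |t|) ^ p) := by
  have h := integrable_one_add_norm (E := ℝ) (μ := volume) (r := -p)
    (by simp [Module.finrank_self]; linarith)
  simpa [Real.norm_eq_abs] using h

lemma oneD_pw {p : ℝ} (hp : p ≤ -2) (t : ℝ) : (1 + |t|) ^ p ≤ (1 + t ^ 2)⁻¹ := by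
  have h1 : (1 + |t|) ^ p ≤ (1 + |t|) ^ (-2 : ℝ) :=
    Real.rpow_le_rpow_of_exponent_le (by linarith [abs_nonneg t]) hp
  have h2 : (1 + |t|) ^ (-2 : ℝ) = ((1 + |t|) ^ (2:ℕ))⁻¹ := by
    rw [← Real.rpow_natCast (1 + |t|) 2, ← Real.rpow_neg (factor_pos t).le]
    norm_num
  have h3 : ((1 + |t|) ^ (2:ℕ))⁻¹ ≤ (1 + t ^ 2)⁻¹ := by
    apply inv_anti₀ (by positivity)
    nlinarith [abs_nonneg t, sq_abs t]
  linarith [h2 ▸ h1]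

lemma oneD_full {p : ℝ} (hp : p ≤ -2) : ∫ t : ℝ, (1 + |t|) ^ p ≤ 4 := by
  have := integral_mono (oneD_integrable hp) integrable_inv_one_add_sq (oneD_pw hp)
  rw [integral_univ_inv_one_add_sq] at this
  linarith [Real.pi_le_four]

lemma tail_set_meas (b : ℝ) : MeasurableSet {t : ℝ | b < |t|} :=
  measurableSet_lt measurable_const continuous_abs.measurable

lemma oneD_tail {p b : ℝ} (hp : p ≤ -2) (hb : 0 < b) :
    ∫ t in {t : ℝ | b < |t|}, (1 + |t|) ^ p ≤ 2 * b ^ (p + 1) := by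
  have hp1 : p < -1 := by linarith
  rw [← integral_indicator (tail_set_meas b)]
  have hfe : (fun t => {t : ℝ | b < |t|}.indicator (fun t => (1 + |t|) ^ p) t)
      = fun t => (Ioi b).indicator (fun u => (1 + u) ^ p) |t| := by
    funext t
    by_cases h : b < |t| <;> simp [indicator, h, mem_Ioi]
  rw [hfe, integral_comp_abs (f := (Ioi b).indicator fun u => (1 + u) ^ p)]
  rw [integral_indicator measurableSet_Ioi, Measure.restrict_restrict measurableSet_Ioi,
    inter_eq_self_of_subset_left (Ioi_subset_Ioi hb.le)]
  have hint1 : IntegrableOn (fun u : ℝ => (1 + u) ^ p) (Ioi b) := by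
    refine ((oneD_integrable hp).integrableOn).congr_fun ?_ measurableSet_Ioi
    intro u hu
    simp only
    rw [abs_of_pos (hb.trans hu)]
  have hmono : ∫ u in Ioi b, (1 + u) ^ p ≤ ∫ u in Ioi b, u ^ p := by
    refine setIntegral_mono_on hint1 (integrableOn_Ioi_rpow_of_lt hp1 hb) measurableSet_Ioi ?_
    intro u hu
    exact Real.rpow_le_rpow_of_nonpos (hb.trans hu) (by linarith) (by linarith)
  rw [integral_Ioi_rpow_of_lt hp1 hb] at hmono
  have hval : -b ^ (p + 1) / (p + 1) ≤ b ^ (p + 1) := by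
    have hX : (0:ℝ) ≤ b ^ (p + 1) := Real.rpow_nonneg hb.le _
    have h2 : -b ^ (p + 1) / (p + 1) = b ^ (p + 1) / (-(p + 1)) := by
      rw [div_neg, neg_div]
    rw [h2, div_le_iff₀ (by linarith)]
    nlinarith
  linarith

/-! Polar coordinates -/

lemma polar (hd : 1 ≤ n) (F : E' → ℝ≥0∞) (hF : Measurable F) :
    ∫⁻ x, F x = ∫⁻ ω : sphere (0 : E') 1, ∫⁻ r in Ioi (0:ℝ),
      ENNReal.ofReal (r ^ (n - 1)) * F (r • (ω : E'))
        ∂(volume : Measure ℝ)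
      ∂((volume : Measure (E')).toSphere) := by
  haveI : Nontrivial E' := by
    refine nontrivial_of_ne 0 (EuclideanSpace.single ⟨0, hd⟩ 1) fun h => ?_
    have := congrFun (congrArg (fun v : E' => (v : Fin n → ℝ)) h) ⟨0, hd⟩
    simp [EuclideanSpace.single_apply] at this
  have hdim : Module.finrank ℝ E' = n := finrank_euclideanSpace_fin
  have h0 : MeasurableSet ({0}ᶜ : Set E') := (measurableSet_singleton 0).compl
  have e1 : ∫⁻ x, F x ∂(volume : Measure E') = ∫⁻ x : ({0}ᶜ : Set E'), F x.1
      ∂((volume : Measure E').comap Subtype.val) := by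
    rw [lintegral_subtype_comap h0]
    rw [← setLIntegral_univ F]
    refine (setLIntegral_congr ?_).symm
    rw [ae_eq_univ, compl_compl]
    exact measure_singleton 0
  rw [e1]
  have hmeas : Measurable fun p : sphere (0 : E') 1 × Ioi (0:ℝ) => F ((p.2 : ℝ) • (p.1 : E')) := by
    apply hF.comp
    exact ((measurable_subtype_coe.comp measurable_snd).smul
      (measurable_subtype_coe.comp measurable_fst))
  have e2 := (Measure.measurePreserving_homeomorphUnitSphereProd
      (volume : Measure E')).lintegral_comp hmeas
  have e2' : ∀ x : ({0}ᶜ : Set E'),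
      F (((homeomorphUnitSphereProd E' x).2 : ℝ) • ((homeomorphUnitSphereProd E' x).1 : E'))
        = F x.1 := by
    intro x
    congr 1
    simp only [homeomorphUnitSphereProd_apply_fst_coe, homeomorphUnitSphereProd_apply_snd_coe]
    rw [smul_smul, mul_inv_cancel₀ (norm_ne_zero_iff.2 x.2), one_smul]
  simp only [e2'] at e2
  rw [e2]
  rw [lintegral_prod _ hmeas.aemeasurable]
  refine lintegral_congr fun ω => ?_
  have hg : Measurable (fun y : ↑(Ioi (0:ℝ)) => F ((y:ℝ) • (ω:E'))) := hF.comp (by fun_prop)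
  calc ∫⁻ y : ↑(Ioi (0:ℝ)), F ((y:ℝ) • (ω:E'))
        ∂(Measure.volumeIoiPow (Module.finrank ℝ E' - 1))
      = ∫⁻ y : ↑(Ioi (0:ℝ)),
          ((fun r : ↑(Ioi (0:ℝ)) => ENNReal.ofReal ((r:ℝ) ^ (Module.finrank ℝ E' - 1))) *
            (fun r : ↑(Ioi (0:ℝ)) => F ((r:ℝ) • (ω:E')))) y
          ∂(Measure.comap Subtype.val volume) :=
        lintegral_withDensity_eq_lintegral_mul _ (by fun_prop) hg
    _ = ∫⁻ y : ↑(Ioi (0:ℝ)),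
          (fun r : ℝ => ENNReal.ofReal (r ^ (n - 1)) * F (r • (ω:E'))) (y:ℝ)
          ∂(Measure.comap Subtype.val volume) := by
        simp only [Pi.mul_apply, hdim]
    _ = ∫⁻ r in Ioi (0:ℝ), ENNReal.ofReal (r ^ (n-1)) * F (r • (ω:E')) :=
        lintegral_subtype_comap measurableSet_Ioi
          (fun r : ℝ => ENNReal.ofReal (r ^ (n - 1)) * F (r • (ω:E')))

lemma measurable_eval (k : Fin n) : Measurable fun x : EuclideanSpace ℝ (Fin n) => x k := by
  have : Continuous fun x : EuclideanSpace ℝ (Fin n) => x k := by fun_prop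
  exact this.measurable

/-! Tail bound -/

lemma tail_bound (hl4 : ∀ j, 4 ≤ ll j) (j0 : Fin n) (hl0 : ∀ j, ll j0 ≤ ll j)
    {b : ℝ} (hb : 0 < b) :
    ∫⁻ x : EuclideanSpace ℝ (Fin n),
        ({x : EuclideanSpace ℝ (Fin n) | Real.sqrt n * b < ‖x‖}.indicator
          (fun x => ENNReal.ofReal (f n ll x))) x
      ≤ ENNReal.ofReal (n * (2 * b ^ (1 - ll j0 / 2) * 4 ^ (n - 1))) := by
  have hexp : ∀ k, -(ll k) / 2 ≤ -2 := fun k => by linarith [hl4 k]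
  set h : Fin n → ℝ → ℝ := fun k t => (1 + |t|) ^ (-(ll k) / 2) with hh
  have h_nonneg : ∀ k t, 0 ≤ h k t := fun k t => Real.rpow_nonneg (factor_pos t).le _
  set H : Fin n → Fin n → ℝ → ℝ := fun j k t =>
    if k = j then ({t : ℝ | b < |t|}.indicator (h k)) t else h k t with hH
  have H_nonneg : ∀ j k t, 0 ≤ H j k t := by
    intro j k t
    by_cases hk : k = j
    · simp only [hH, if_pos hk]
      exact indicator_nonneg (fun t _ => h_nonneg k t) t
    · simp only [hH, if_neg hk]
      exact h_nonneg k t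
  have H_int : ∀ j k, Integrable (H j k) := by
    intro j k
    by_cases hk : k = j
    · simpa [hH, hk] using (oneD_integrable (hexp k)).indicator (tail_set_meas b)
    · simpa [hH, hk] using oneD_integrable (hexp k)
  have hmeasH : ∀ j k, Measurable (H j k) := by
    intro j k
    by_cases hk : k = j
    · simp only [hH, if_pos hk]
      exact Measurable.indicator (by fun_prop) (tail_set_meas b)
    · simp only [hH, if_neg hk]
      fun_prop
  have hpt : ∀ x : EuclideanSpace ℝ (Fin n),
      ({x : EuclideanSpace ℝ (Fin n) | Real.sqrt n * b < ‖x‖}.indicator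
        (fun x => ENNReal.ofReal (f n ll x))) x
      ≤ ∑ j, ENNReal.ofReal (∏ k, H j k (x k)) := by
    intro x
    by_cases hx : x ∈ {x : EuclideanSpace ℝ (Fin n) | Real.sqrt n * b < ‖x‖}
    · rw [indicator_of_mem hx]
      obtain ⟨j, hj⟩ : ∃ j, b < |x j| := by
        by_contra hcon
        push_neg at hcon
        have hnorm : ‖x‖ ≤ Real.sqrt n * b := by
          rw [EuclideanSpace.norm_eq]
          have hsum : ∑ i, ‖x i‖ ^ 2 ≤ (n : ℝ) * b ^ 2 := by
            calc ∑ i, ‖x i‖ ^ 2 ≤ ∑ _i : Fin n, b ^ 2 := by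
                  refine Finset.sum_le_sum fun i _ => ?_
                  rw [Real.norm_eq_abs]
                  nlinarith [abs_nonneg (x i), hcon i]
              _ = (n : ℝ) * b ^ 2 := by simp [mul_comm]
          calc Real.sqrt (∑ i, ‖x i‖ ^ 2) ≤ Real.sqrt ((n : ℝ) * b ^ 2) :=
                Real.sqrt_le_sqrt hsum
            _ = Real.sqrt n * b := by
                rw [Real.sqrt_mul (Nat.cast_nonneg n), Real.sqrt_sq hb.le]
        exact absurd hx (not_lt.2 hnorm)
      calc ENNReal.ofReal (f n ll x) = ENNReal.ofReal (∏ k, H j k (x k)) := by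
            congr 1
            refine Finset.prod_congr rfl fun k _ => ?_
            by_cases hk : k = j
            · subst hk
              have : x k ∈ {t : ℝ | b < |t|} := hj
              simp only [hH, if_pos rfl, indicator_of_mem this, hh]
            · simp only [hH, if_neg hk, hh]
        _ ≤ ∑ j', ENNReal.ofReal (∏ k, H j' k (x k)) :=
            Finset.single_le_sum (f := fun j' => ENNReal.ofReal (∏ k, H j' k (x k)))
              (fun j' _ => zero_le) (Finset.mem_univ j)
    · rw [indicator_of_notMem hx]
      exact zero_le
  refine le_trans (lintegral_mono hpt) ?_
  have hmeasP : ∀ j, Measurable fun y : Fin n → ℝ => ENNReal.ofReal (∏ k, H j k (y k)) :=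
    fun j => ENNReal.measurable_ofReal.comp
      (Finset.measurable_prod _ fun k _ => (hmeasH j k).comp (measurable_pi_apply k))
  have hmeasPE : ∀ j, Measurable fun x : EuclideanSpace ℝ (Fin n) =>
      ENNReal.ofReal (∏ k, H j k (x k)) :=
    fun j => ENNReal.measurable_ofReal.comp
      (Finset.measurable_prod _ fun k _ => (hmeasH j k).comp (measurable_eval k))
  calc ∫⁻ x : EuclideanSpace ℝ (Fin n), ∑ j, ENNReal.ofReal (∏ k, H j k (x k))
      = ∑ j, ∫⁻ x : EuclideanSpace ℝ (Fin n), ENNReal.ofReal (∏ k, H j k (x k)) :=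
        lintegral_finset_sum _ fun j _ => hmeasPE j
    _ ≤ ∑ _j : Fin n, ENNReal.ofReal (2 * b ^ (1 - ll j0 / 2) * 4 ^ (n - 1)) := by
        refine Finset.sum_le_sum fun j _ => ?_
        have heq : ∫⁻ x : EuclideanSpace ℝ (Fin n), ENNReal.ofReal (∏ k, H j k (x k))
            = ∫⁻ y : Fin n → ℝ, ENNReal.ofReal (∏ k, H j k (y k)) :=
          (EuclideanSpace.volume_preserving_symm_measurableEquiv_toLp (ι := Fin n)).lintegral_comp (hmeasP j)
        rw [heq]
        have hintP : Integrable (fun y : Fin n → ℝ => ∏ k, H j k (y k)) :=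
          Integrable.fintype_prod_dep (H_int j)
        rw [← ofReal_integral_eq_lintegral_ofReal hintP
          (ae_of_all _ fun y => Finset.prod_nonneg fun k _ => H_nonneg j k (y k))]
        apply ENNReal.ofReal_le_ofReal
        rw [volume_pi, integral_fintype_prod_eq_prod (ι := Fin n) (H j)]
        set c : Fin n → ℝ := fun k => if k = j then 2 * b ^ (1 - ll j0 / 2) else 4 with hc
        have hbexp : (0:ℝ) ≤ b ^ (1 - ll j0 / 2) := Real.rpow_nonneg hb.le _
        have hck : ∀ k, ∫ t, H j k t ≤ c k := by
          intro k
          by_cases hk : k = j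
          · subst hk
            simp only [hH, hc, if_pos rfl]
            calc ∫ t, ({t : ℝ | b < |t|}.indicator (h k)) t
                ≤ ∫ t, ({t : ℝ | b < |t|}.indicator fun t => (1 + |t|) ^ (-(ll j0) / 2)) t := by
                  refine integral_mono ((oneD_integrable (hexp k)).indicator (tail_set_meas b))
                    ((oneD_integrable (hexp j0)).indicator (tail_set_meas b)) fun t => ?_
                  refine indicator_le_indicator ?_
                  exact Real.rpow_le_rpow_of_exponent_le (by linarith [abs_nonneg t])
                    (by linarith [hl0 k])
                _ ≤ 2 * b ^ (1 - ll j0 / 2) := by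
                  rw [integral_indicator (tail_set_meas b)]
                  have := oneD_tail (hexp j0) hb
                  have he : -(ll j0) / 2 + 1 = 1 - ll j0 / 2 := by ring
                  rw [he] at this
                  exact this
          · simp only [hH, hc, if_neg hk]
            exact oneD_full (hexp k)
        calc ∏ k, ∫ t, H j k t ≤ ∏ k, c k :=
              Finset.prod_le_prod (fun k _ => integral_nonneg fun t => H_nonneg j k t)
                (fun k _ => hck k)
          _ = 2 * b ^ (1 - ll j0 / 2) * 4 ^ (n - 1) := by
              rw [← Finset.mul_prod_erase Finset.univ c (Finset.mem_univ j)]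
              have h1 : c j = 2 * b ^ (1 - ll j0 / 2) := by simp [hc]
              have h2 : ∏ k ∈ Finset.univ.erase j, c k = 4 ^ (n - 1) := by
                rw [Finset.prod_congr rfl fun k hk =>
                  show c k = 4 by simp [hc, (Finset.mem_erase.1 hk).1]]
                rw [Finset.prod_const, Finset.card_erase_of_mem (Finset.mem_univ j),
                  Finset.card_univ, Fintype.card_fin]
              rw [h1, h2]
    _ = ENNReal.ofReal (n * (2 * b ^ (1 - ll j0 / 2) * 4 ^ (n - 1))) := by
        rw [Finset.sum_const, Finset.card_univ, Fintype.card_fin, nsmul_eq_mul,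
          ← ENNReal.ofReal_natCast n, ← ENNReal.ofReal_mul (Nat.cast_nonneg n)]

/-! Lower polar bound -/

lemma lower_polar (hd : 1 ≤ n) (hl : ∀ j, 0 ≤ ll j) {ρ : ℝ} (hρ : 0 < ρ) :
    ENNReal.ofReal ((ρ/2) ^ (n-1) * (ρ/2)) *
      ∫⁻ ω : sphere (0 : EuclideanSpace ℝ (Fin n)) 1,
        ENNReal.ofReal (f n ll (ρ • (ω : EuclideanSpace ℝ (Fin n))))
        ∂((volume : Measure (EuclideanSpace ℝ (Fin n))).toSphere)
    ≤ ∫⁻ x : EuclideanSpace ℝ (Fin n),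
        ({x : EuclideanSpace ℝ (Fin n) | ρ/2 < ‖x‖ ∧ ‖x‖ ≤ ρ}.indicator
          (fun x => ENNReal.ofReal (f n ll x))) x := by
  set A : Set (EuclideanSpace ℝ (Fin n)) := {x | ρ/2 < ‖x‖ ∧ ‖x‖ ≤ ρ} with hA
  have hAm : MeasurableSet A := by
    apply MeasurableSet.inter
    · exact measurableSet_lt measurable_const continuous_norm.measurable
    · exact measurableSet_le continuous_norm.measurable measurable_const
  have hFm : Measurable (A.indicator fun x => ENNReal.ofReal (f n ll x)) :=
    Measurable.indicator (f_continuous.measurable.ennreal_ofReal) hAm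
  rw [polar hd _ hFm]
  have hinner : ∀ ω : sphere (0 : EuclideanSpace ℝ (Fin n)) 1,
      ENNReal.ofReal ((ρ/2) ^ (n-1) * (ρ/2)) *
        ENNReal.ofReal (f n ll (ρ • (ω : EuclideanSpace ℝ (Fin n))))
      ≤ ∫⁻ r in Ioi (0:ℝ), ENNReal.ofReal (r ^ (n-1)) *
          (A.indicator fun x => ENNReal.ofReal (f n ll x))
            (r • (ω : EuclideanSpace ℝ (Fin n))) := by
    intro ω
    have hω : ‖(ω : EuclideanSpace ℝ (Fin n))‖ = 1 := mem_sphere_zero_iff_norm.1 ω.2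
    have hsub : Ioc (ρ/2) ρ ⊆ Ioi (0:ℝ) := fun r hr => lt_trans (by linarith) hr.1
    refine le_trans ?_ (lintegral_mono' (Measure.restrict_mono hsub le_rfl) le_rfl)
    have hptr : ∀ r ∈ Ioc (ρ/2) ρ,
        ENNReal.ofReal ((ρ/2) ^ (n-1)) *
            ENNReal.ofReal (f n ll (ρ • (ω : EuclideanSpace ℝ (Fin n))))
        ≤ ENNReal.ofReal (r ^ (n-1)) *
          (A.indicator fun x => ENNReal.ofReal (f n ll x))
            (r • (ω : EuclideanSpace ℝ (Fin n))) := by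
      intro r hr
      have hr0 : 0 < r := lt_trans (by linarith) hr.1
      have hnorm : ‖r • (ω : EuclideanSpace ℝ (Fin n))‖ = r := by
        rw [norm_smul, hω, Real.norm_eq_abs, abs_of_pos hr0, mul_one]
      have hmem : r • (ω : EuclideanSpace ℝ (Fin n)) ∈ A := by
        constructor <;> rw [hnorm]
        exacts [hr.1, hr.2]
      rw [indicator_of_mem hmem]
      refine mul_le_mul' (ENNReal.ofReal_le_ofReal ?_) (ENNReal.ofReal_le_ofReal ?_)
      · exact pow_le_pow_left₀ (by linarith) hr.1.le _
      · refine f_anti hl fun j => ?_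
        have h1 : (r • (ω : EuclideanSpace ℝ (Fin n))) j
            = r * (ω : EuclideanSpace ℝ (Fin n)) j := rfl
        have h2 : (ρ • (ω : EuclideanSpace ℝ (Fin n))) j
            = ρ * (ω : EuclideanSpace ℝ (Fin n)) j := rfl
        rw [h1, h2, abs_mul, abs_mul]
        apply mul_le_mul_of_nonneg_right _ (abs_nonneg _)
        rw [abs_of_pos hr0, abs_of_pos hρ]
        exact hr.2
    calc ENNReal.ofReal ((ρ/2) ^ (n-1) * (ρ/2)) *
          ENNReal.ofReal (f n ll (ρ • (ω : EuclideanSpace ℝ (Fin n))))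
        = (ENNReal.ofReal ((ρ/2) ^ (n-1)) *
            ENNReal.ofReal (f n ll (ρ • (ω : EuclideanSpace ℝ (Fin n))))) *
              ENNReal.ofReal (ρ/2) := by
          rw [ENNReal.ofReal_mul (by positivity)]
          ring
      _ = (ENNReal.ofReal ((ρ/2) ^ (n-1)) *
            ENNReal.ofReal (f n ll (ρ • (ω : EuclideanSpace ℝ (Fin n))))) *
              volume (Ioc (ρ/2) ρ) := by
          rw [Real.volume_Ioc]
          congr 1
          congr 1
          ring
      _ = ∫⁻ _r in Ioc (ρ/2) ρ, ENNReal.ofReal ((ρ/2) ^ (n-1)) *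
            ENNReal.ofReal (f n ll (ρ • (ω : EuclideanSpace ℝ (Fin n)))) :=
          (setLIntegral_const _ _).symm
      _ ≤ ∫⁻ r in Ioc (ρ/2) ρ, ENNReal.ofReal (r ^ (n-1)) *
            (A.indicator fun x => ENNReal.ofReal (f n ll x))
              (r • (ω : EuclideanSpace ℝ (Fin n))) :=
          setLIntegral_mono ((measurable_id.pow_const _).ennreal_ofReal.mul
            (hFm.comp (measurable_id.smul_const _))) hptr
  calc ENNReal.ofReal ((ρ/2) ^ (n-1) * (ρ/2)) *
        ∫⁻ ω : sphere (0 : EuclideanSpace ℝ (Fin n)) 1,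
          ENNReal.ofReal (f n ll (ρ • (ω : EuclideanSpace ℝ (Fin n))))
          ∂((volume : Measure (EuclideanSpace ℝ (Fin n))).toSphere)
      = ∫⁻ ω : sphere (0 : EuclideanSpace ℝ (Fin n)) 1,
          ENNReal.ofReal ((ρ/2) ^ (n-1) * (ρ/2)) *
            ENNReal.ofReal (f n ll (ρ • (ω : EuclideanSpace ℝ (Fin n))))
          ∂((volume : Measure (EuclideanSpace ℝ (Fin n))).toSphere) := by
        have hc : Measurable fun ω : sphere (0 : EuclideanSpace ℝ (Fin n)) 1 =>
            ENNReal.ofReal (f n ll (ρ • (ω : EuclideanSpace ℝ (Fin n)))) := by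
          have : Continuous fun ω : sphere (0 : EuclideanSpace ℝ (Fin n)) 1 =>
              f n ll (ρ • (ω : EuclideanSpace ℝ (Fin n))) :=
            f_continuous.comp (continuous_subtype_val.const_smul ρ)
          exact this.measurable.ennreal_ofReal
        exact (lintegral_const_mul _ hc).symm
    _ ≤ _ := lintegral_mono hinner

end Helpers

set_option maxHeartbeats 2000000 in
theorem statement9 (hd : 1 ≤ d) (hl4 : ∀ j, 4 ≤ l j) (hmono : Monotone l) :
    (∀ x y : EuclideanSpace ℝ (Fin d), f d l x * f d l y ≤ f d l (x + y)) ∧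
    (∃ C > (0 : ℝ), ∀ ρ : ℝ, 0 < ρ →
      ((sphμ d) Set.univ).toReal * (1 + ρ) ^ (-(d : ℝ) * l ⟨d - 1, Nat.sub_lt hd one_pos⟩ / 2) ≤
        (∫ ω : Metric.sphere (0 : EuclideanSpace ℝ (Fin d)) 1,
          f d l (WithLp.toLp 2 (fun j => ρ * (ω : EuclideanSpace ℝ (Fin d)) j)) ∂(sphμ d)) ∧
      (∫ ω : Metric.sphere (0 : EuclideanSpace ℝ (Fin d)) 1,
          f d l (WithLp.toLp 2 (fun j => ρ * (ω : EuclideanSpace ℝ (Fin d)) j)) ∂(sphμ d)) ≤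
        C * (1 + ρ) ^ (1 - (d : ℝ) - l ⟨0, hd⟩ / 2)) := by
  have hl0 : ∀ j, 0 ≤ l j := fun j => by linarith [hl4 j]
  refine ⟨part1 hl0, ?_⟩
  classical
  set σ : Measure (sphere (0 : (EuclideanSpace ℝ (Fin d))) 1) := sphμ d with hσ
  haveI : IsFiniteMeasure σ :=
    show IsFiniteMeasure ((volume : Measure (EuclideanSpace ℝ (Fin d))).toSphere) from
      inferInstance
  set jmax : Fin d := ⟨d - 1, Nat.sub_lt hd one_pos⟩ with hjmax
  set j0 : Fin d := ⟨0, hd⟩ with hj0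
  have hlmax : ∀ j, l j ≤ l jmax := fun j => hmono (by
    have := j.isLt
    simp only [hjmax, Fin.le_def]
    omega)
  have hlmin : ∀ j, l j0 ≤ l j := fun j => hmono (by
    simp only [hj0, Fin.le_def]
    omega)
  have hd1 : (1:ℝ) ≤ (d:ℝ) := by exact_mod_cast hd
  have hsd : (0:ℝ) < Real.sqrt d := Real.sqrt_pos.2 (by positivity)
  set σT : ℝ := (σ Set.univ).toReal with hσT
  have hσT0 : 0 ≤ σT := ENNReal.toReal_nonneg
  set Cs : ℝ := σT * 2 ^ ((d:ℝ) + l j0 / 2) with hCs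
  set D4 : ℝ := (4 * Real.sqrt d) ^ (l j0 / 2 - 1) with hD4
  have hD4pos : 0 < D4 := Real.rpow_pos_of_pos (by linarith) _
  set Cb : ℝ := (d:ℝ) * 2 * 4 ^ (d - 1) * D4 * 4 ^ d with hCb
  have hCbpos : 0 < Cb := by
    have h41 : (0:ℝ) < 4 ^ (d-1) := by positivity
    have h42 : (0:ℝ) < 4 ^ d := by positivity
    have hdpos : (0:ℝ) < d := by linarith
    positivity
  refine ⟨max Cs Cb, lt_of_lt_of_le hCbpos (le_max_right _ _), fun ρ hρ => ?_⟩
  set e : ℝ := 1 - (d:ℝ) - l j0 / 2 with he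
  have he0 : e ≤ 0 := by
    have := hl4 j0
    simp only [he]
    linarith
  have hρ1pos : (0:ℝ) < 1 + ρ := by linarith
  have hP0 : 0 ≤ (1 + ρ) ^ e := Real.rpow_nonneg hρ1pos.le _
  set g : sphere (0 : (EuclideanSpace ℝ (Fin d))) 1 → ℝ := fun ω => f d l (ρ • (ω : (EuclideanSpace ℝ (Fin d)))) with hg
  have hgrw : (fun ω : sphere (0 : (EuclideanSpace ℝ (Fin d))) 1 => f d l (WithLp.toLp 2 (fun j => ρ * (ω : (EuclideanSpace ℝ (Fin d))) j))) = g := rfl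
  have hcontg : Continuous g := f_continuous.comp (continuous_subtype_val.const_smul ρ)
  have hintg : Integrable g σ :=
    hcontg.integrable_of_hasCompactSupport (HasCompactSupport.of_compactSpace g)
  constructor
  · -- lower bound
    have hpw : ∀ ω : sphere (0 : (EuclideanSpace ℝ (Fin d))) 1, (1 + ρ) ^ (-(d:ℝ) * l jmax / 2) ≤ g ω := by
      intro ω
      have hω : ‖(ω : (EuclideanSpace ℝ (Fin d)))‖ = 1 := mem_sphere_zero_iff_norm.1 ω.2
      have hcoord : ∀ j, |(ω : (EuclideanSpace ℝ (Fin d))) j| ≤ 1 := fun j => le_trans (coord_le_norm (ω : (EuclideanSpace ℝ (Fin d))) j) (le_of_eq hω)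
      have hstep : ∀ j : Fin d, (1 + ρ) ^ (-(l jmax) / 2) ≤ (1 + |ρ * (ω : (EuclideanSpace ℝ (Fin d))) j|) ^ (-(l j) / 2) := by
        intro j
        have h1 : (1 + ρ) ^ (-(l jmax) / 2) ≤ (1 + ρ) ^ (-(l j) / 2) :=
          Real.rpow_le_rpow_of_exponent_le (by linarith) (by linarith [hlmax j])
        have h2 : (1 + ρ) ^ (-(l j) / 2) ≤ (1 + |ρ * (ω : (EuclideanSpace ℝ (Fin d))) j|) ^ (-(l j) / 2) := by
          refine Real.rpow_le_rpow_of_nonpos (factor_pos _) ?_ (by linarith [hl0 j])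
          rw [abs_mul, abs_of_pos hρ]
          nlinarith [hcoord j, abs_nonneg ((ω : (EuclideanSpace ℝ (Fin d))) j)]
        linarith
      calc (1 + ρ) ^ (-(d:ℝ) * l jmax / 2)
          = ∏ _j : Fin d, (1 + ρ) ^ (-(l jmax) / 2) := by
            rw [Finset.prod_const, Finset.card_univ, Fintype.card_fin,
              ← Real.rpow_natCast ((1 + ρ) ^ (-(l jmax) / 2)) d,
              ← Real.rpow_mul hρ1pos.le]
            congr 1
            ring
        _ ≤ ∏ j, (1 + |ρ * (ω : (EuclideanSpace ℝ (Fin d))) j|) ^ (-(l j) / 2) :=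
            Finset.prod_le_prod (fun j _ => Real.rpow_nonneg (by positivity) _)
              (fun j _ => hstep j)
        _ = g ω := rfl
    calc σT * (1 + ρ) ^ (-(d:ℝ) * l jmax / 2)
        = ∫ _ω : sphere (0 : (EuclideanSpace ℝ (Fin d))) 1, (1 + ρ) ^ (-(d:ℝ) * l jmax / 2) ∂σ := by
          rw [integral_const, smul_eq_mul]
          rfl
      _ ≤ ∫ ω, g ω ∂σ := integral_mono (integrable_const _) hintg hpw
  · -- upper bound
    rw [show (fun ω : sphere (0 : (EuclideanSpace ℝ (Fin d))) 1 => f d l (WithLp.toLp 2 (fun j => ρ * (ω : (EuclideanSpace ℝ (Fin d))) j))) = g from rfl]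
    set L : ℝ≥0∞ := ∫⁻ ω, ENNReal.ofReal (g ω) ∂σ with hL
    have hSL : ∫ ω, g ω ∂σ = L.toReal :=
      integral_eq_lintegral_of_nonneg_ae (ae_of_all _ fun ω => f_nonneg _)
        hcontg.aestronglyMeasurable
    have hLle : L ≤ σ Set.univ := by
      calc L ≤ ∫⁻ _ω, 1 ∂σ :=
            lintegral_mono fun ω => ENNReal.ofReal_le_one.2 (f_le_one hl0 _)
        _ = σ Set.univ := by rw [lintegral_one]
    have hLne : L ≠ ⊤ := (lt_of_le_of_lt hLle (measure_lt_top σ Set.univ)).ne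
    by_cases hρsmall : ρ ≤ 1
    · -- small ρ
      have hS_le : ∫ ω, g ω ∂σ ≤ σT := by
        rw [hSL]
        exact ENNReal.toReal_mono (measure_ne_top σ Set.univ) hLle
      have h2e : (2:ℝ) ^ e ≤ (1 + ρ) ^ e :=
        Real.rpow_le_rpow_of_nonpos hρ1pos (by linarith) he0
      have hCs2 : Cs * (2:ℝ) ^ e = 2 * σT := by
        rw [hCs, mul_assoc, ← Real.rpow_add two_pos]
        rw [show (d:ℝ) + l j0 / 2 + e = 1 by rw [he]; ring, Real.rpow_one]
        ring
      have hfinal : σT ≤ Cs * (1 + ρ) ^ e := by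
        have hCs0 : 0 ≤ Cs := by
          have : (0:ℝ) ≤ 2 ^ ((d:ℝ) + l j0 / 2) := Real.rpow_nonneg two_pos.le _
          exact mul_nonneg hσT0 this
        calc σT ≤ 2 * σT := by linarith
          _ = Cs * (2:ℝ) ^ e := hCs2.symm
          _ ≤ Cs * (1 + ρ) ^ e := mul_le_mul_of_nonneg_left h2e hCs0
      calc ∫ ω, g ω ∂σ ≤ σT := hS_le
        _ ≤ Cs * (1 + ρ) ^ e := hfinal
        _ ≤ max Cs Cb * (1 + ρ) ^ e :=
            mul_le_mul_of_nonneg_right (le_max_left _ _) hP0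
    · -- large ρ
      push_neg at hρsmall
      have hρ1 : 1 ≤ ρ := hρsmall.le
      set b : ℝ := ρ / (2 * Real.sqrt d) with hbdef
      have hb : 0 < b := by positivity
      set q : ℝ := 1 - l j0 / 2 with hqdef
      have hq0 : q ≤ 0 := by
        have := hl4 j0
        simp only [hqdef]
        linarith
      set K : ℝ := (d:ℝ) * (2 * b ^ q * 4 ^ (d - 1)) with hK
      have hK0 : 0 ≤ K := by
        have hbq : (0:ℝ) ≤ b ^ q := Real.rpow_nonneg hb.le _
        have h41 : (0:ℝ) ≤ 4 ^ (d-1) := by positivity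
        positivity
      have hsb : Real.sqrt d * b = ρ / 2 := by
        rw [hbdef]
        field_simp
      have key : ENNReal.ofReal ((ρ/2) ^ (d-1) * (ρ/2)) * L ≤ ENNReal.ofReal K := by
        calc ENNReal.ofReal ((ρ/2) ^ (d-1) * (ρ/2)) * L
            ≤ ∫⁻ x : (EuclideanSpace ℝ (Fin d)), ({x : (EuclideanSpace ℝ (Fin d)) | ρ/2 < ‖x‖ ∧ ‖x‖ ≤ ρ}.indicator
                (fun x => ENNReal.ofReal (f d l x))) x := lower_polar hd hl0 hρ
          _ ≤ ∫⁻ x : (EuclideanSpace ℝ (Fin d)), ({x : (EuclideanSpace ℝ (Fin d)) | Real.sqrt d * b < ‖x‖}.indicator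
                (fun x => ENNReal.ofReal (f d l x))) x := by
              refine lintegral_mono fun x => ?_
              refine indicator_le_indicator_of_subset ?_ (fun _ => zero_le) x
              intro y hy
              rw [mem_setOf_eq, hsb]
              exact hy.1
          _ ≤ ENNReal.ofReal K := tail_bound hl4 j0 hlmin hb
      set X : ℝ := (ρ/2) ^ (d-1) * (ρ/2) with hXdef
      have hX0 : 0 < X := by positivity
      have hXpow : X = (ρ/2) ^ d := by
        rw [hXdef, ← pow_succ]
        congr 1
        omega
      have hXS : X * (∫ ω, g ω ∂σ) ≤ K := by
        have h1 := ENNReal.toReal_mono ENNReal.ofReal_ne_top key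
        rw [ENNReal.toReal_mul, ENNReal.toReal_ofReal hX0.le,
          ENNReal.toReal_ofReal hK0] at h1
        rw [hSL]
        exact h1
      -- real arithmetic
      have hb2 : (1 + ρ) / (4 * Real.sqrt d) ≤ b := by
        rw [hbdef, div_le_div_iff₀ (by positivity) (by positivity)]
        nlinarith [hsd]
      have h1 : b ^ q ≤ D4 * (1 + ρ) ^ q := by
        have hbl : (0:ℝ) < (1 + ρ) / (4 * Real.sqrt d) := by positivity
        calc b ^ q ≤ ((1 + ρ) / (4 * Real.sqrt d)) ^ q :=
              Real.rpow_le_rpow_of_nonpos hbl hb2 hq0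
          _ = (1 + ρ) ^ q / (4 * Real.sqrt d) ^ q :=
              Real.div_rpow hρ1pos.le (by positivity : (0:ℝ) ≤ 4 * Real.sqrt d) q
          _ = (1 + ρ) ^ q * ((4 * Real.sqrt d) ^ q)⁻¹ := by ring
          _ = (1 + ρ) ^ q * (4 * Real.sqrt d) ^ (-q) := by
              rw [Real.rpow_neg (by positivity)]
          _ = D4 * (1 + ρ) ^ q := by
              rw [hD4, show -q = l j0 / 2 - 1 by rw [hqdef]; ring]
              ring
      have h2 : (1 + ρ) ^ d ≤ 4 ^ d * (ρ/2) ^ d := by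
        calc (1 + ρ) ^ d ≤ (2 * ρ) ^ d := pow_le_pow_left₀ (by linarith) (by linarith) d
          _ = 4 ^ d * (ρ/2) ^ d := by
            rw [← mul_pow]
            congr 1
            ring
      have h3 : (1 + ρ) ^ q = (1 + ρ) ^ (d:ℕ) * (1 + ρ) ^ e := by
        rw [← Real.rpow_natCast (1 + ρ) d, ← Real.rpow_add hρ1pos]
        congr 1
        rw [hqdef, he]
        ring
      have hKle : K ≤ X * (Cb * (1 + ρ) ^ e) := by
        have h41 : (0:ℝ) ≤ 4 ^ (d-1) := by positivity
        have hstep1 : K ≤ (d:ℝ) * (2 * (D4 * (1 + ρ) ^ q) * 4 ^ (d - 1)) := by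
          rw [hK]
          have : 2 * b ^ q * 4 ^ (d-1) ≤ 2 * (D4 * (1 + ρ) ^ q) * 4 ^ (d-1) := by
            nlinarith [h1, h41]
          exact mul_le_mul_of_nonneg_left this (by positivity)
        have hstep2 : (d:ℝ) * (2 * (D4 * (1 + ρ) ^ q) * 4 ^ (d - 1))
            = ((d:ℝ) * 2 * 4 ^ (d-1) * D4) * ((1 + ρ) ^ (d:ℕ) * (1 + ρ) ^ e) := by
          rw [← h3]
          ring
        have hcoef : (0:ℝ) ≤ (d:ℝ) * 2 * 4 ^ (d-1) * D4 := by positivity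
        have hstep3 : ((d:ℝ) * 2 * 4 ^ (d-1) * D4) * ((1 + ρ) ^ (d:ℕ) * (1 + ρ) ^ e)
            ≤ ((d:ℝ) * 2 * 4 ^ (d-1) * D4) * ((4 ^ d * (ρ/2) ^ d) * (1 + ρ) ^ e) := by
          refine mul_le_mul_of_nonneg_left ?_ hcoef
          exact mul_le_mul_of_nonneg_right h2 hP0
        calc K ≤ (d:ℝ) * (2 * (D4 * (1 + ρ) ^ q) * 4 ^ (d - 1)) := hstep1
          _ = ((d:ℝ) * 2 * 4 ^ (d-1) * D4) * ((1 + ρ) ^ (d:ℕ) * (1 + ρ) ^ e) := hstep2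
          _ ≤ ((d:ℝ) * 2 * 4 ^ (d-1) * D4) * ((4 ^ d * (ρ/2) ^ d) * (1 + ρ) ^ e) := hstep3
          _ = X * (Cb * (1 + ρ) ^ e) := by
            rw [hXpow, hCb]
            ring
      have hfin : ∫ ω, g ω ∂σ ≤ Cb * (1 + ρ) ^ e :=
        le_of_mul_le_mul_left (hXS.trans hKle) hX0
      calc ∫ ω, g ω ∂σ ≤ Cb * (1 + ρ) ^ e := hfin
        _ ≤ max Cs Cb * (1 + ρ) ^ e :=
            mul_le_mul_of_nonneg_right (le_max_right _ _) hP0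

end Stmt9
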